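/- For every connected bridgeless graph Γ on n ≥ 3 vertices, SO(Γ) ≥ √8 · n, with equality if and only if Γ is the cycle C_n. -/

import Mathlib

open SimpleGraph

noncomputable def somborIndex {V : Type*} [Fintype V] (G : SimpleGraph V) : ℝ :=
  letI := Classical.decEq V
  letI : DecidableRel G.Adj := Classical.decRel _
  ∑ e ∈ G.edgeFinset,
    Sym2.lift ⟨fun u v => Real.sqrt ((G.degree u : ℝ) ^ 2 + (G.degree v : ℝ) ^ 2),
      fun u v => by dsimp only; rw [add_comm]⟩ e

namespace SomborAux

open Finset


open Classical in
noncomputable def nxt {V : Type*} (G : SimpleGraph V) (a b : V) : V :=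
  if h : ∃ c, G.Adj b c ∧ c ≠ a then h.choose else a

noncomputable def seq {V : Type*} (G : SimpleGraph V) (x : V × V) : ℕ → V × V
  | 0 => x
  | k+1 => ((seq G x k).2, nxt G (seq G x k).1 (seq G x k).2)

variable {V : Type*} [Fintype V] [DecidableEq V] {G : SimpleGraph V} [DecidableRel G.Adj]

lemma deg_ge_two (hn : 3 ≤ Fintype.card V) (hconn : G.Connected)
    (hbridgeless : ∀ e ∈ G.edgeSet, ¬ G.IsBridge e) (v : V) : 2 ≤ G.degree v := by
  -- v has a neighbor
  obtain ⟨u, hu⟩ := Fintype.exists_ne_of_one_lt_card (by omega) v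
  obtain ⟨w, hw⟩ : ∃ w, G.Adj v w := by
    obtain ⟨p⟩ := hconn v u
    cases p with
    | nil => exact absurd rfl hu.symm  -- v = u contradiction? handled below
    | cons h q => exact ⟨_, h⟩
  have hpos : 0 < G.degree v := (G.degree_pos_iff_exists_adj v).mpr ⟨w, hw⟩
  rcases Nat.lt_or_ge (G.degree v) 2 with h2 | h2
  · -- degree v = 1; the edge s(v,w) is a bridge
    have hdeg1 : G.degree v = 1 := by omega
    have hset : G.neighborFinset v = {w} := by
      obtain ⟨a, ha⟩ := Finset.card_eq_one.mp hdeg1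
      have : w ∈ G.neighborFinset v := by simp [hw]
      rw [ha] at this ⊢
      simp_all
    have hbridge : G.IsBridge s(v, w) := by
      rw [isBridge_iff_adj_and_forall_walk_mem_edges]
      intro p
      cases p with
      | nil => exact absurd rfl (G.ne_of_adj hw)
      | cons h q =>
        have hy := (G.mem_neighborFinset v _).mpr h
        rw [hset, Finset.mem_singleton] at hy
        simp [Walk.edges_cons, hy]
    exact absurd hbridge (hbridgeless _ (G.mem_edgeSet.mpr hw))
  · exact h2


set_option linter.unusedSectionVars false


lemma nxt_spec (hd2 : ∀ v, G.degree v = 2) {a b : V} (hab : G.Adj a b) :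
    G.Adj b (nxt G a b) ∧ nxt G a b ≠ a ∧ ∀ c, G.Adj b c → c = a ∨ c = nxt G a b := by
  obtain ⟨x, y, hxy, hset⟩ := Finset.card_eq_two.mp (hd2 b)
  have hmem : ∀ c, G.Adj b c ↔ (c = x ∨ c = y) := by
    intro c
    rw [← G.mem_neighborFinset b c, hset]
    simp
  have ha : a = x ∨ a = y := (hmem a).mp hab.symm
  have hex : ∃ c, G.Adj b c ∧ c ≠ a := by
    rcases ha with rfl | rfl
    · exact ⟨y, (hmem y).mpr (Or.inr rfl), hxy.symm⟩
    · exact ⟨x, (hmem x).mpr (Or.inl rfl), hxy⟩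
  rw [nxt, dif_pos hex]
  refine ⟨hex.choose_spec.1, hex.choose_spec.2, fun c hc => ?_⟩
  have h1 := (hmem _).mp hex.choose_spec.1
  have h2 := hex.choose_spec.2
  have h3 := (hmem c).mp hc
  rcases ha with rfl | rfl <;> rcases h1 with h1 | h1 <;> rcases h3 with rfl | rfl <;> tauto

lemma mod_aux (n i : ℕ) (hn : 3 ≤ n) (hi : i < n) : ((i + n - 1) % n + 1) % n = i := by
  rcases Nat.eq_zero_or_pos i with rfl | h0
  · rw [show 0 + n - 1 = n - 1 by omega, Nat.mod_eq_of_lt (show n - 1 < n by omega),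
      show n - 1 + 1 = n by omega, Nat.mod_self]
  · rw [show i + n - 1 = (i - 1) + n by omega, Nat.add_mod_right,
      Nat.mod_eq_of_lt (show i - 1 < n by omega), show i - 1 + 1 = i by omega,
      Nat.mod_eq_of_lt hi]

lemma cycle_iso (hconn : G.Connected) (hd2 : ∀ v, G.degree v = 2)
    (hn : 3 ≤ Fintype.card V) :
    Nonempty (G ≃g cycleGraph (Fintype.card V)) := by
  have hV : Nonempty V := Fintype.card_pos_iff.mp (by omega)
  obtain ⟨v0⟩ := hV
  obtain ⟨v1, h01⟩ : ∃ w, G.Adj v0 w :=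
    (G.degree_pos_iff_exists_adj v0).mp (by rw [hd2]; omega)
  set f : ℕ → V × V := seq G (v0, v1) with hf
  set g : ℕ → V := fun k => (f k).1 with hgdef
  have hstep : ∀ k, f (k+1) = ((f k).2, nxt G (f k).1 (f k).2) := fun k => rfl
  have hadj : ∀ k, G.Adj (f k).1 (f k).2 := by
    intro k
    induction k with
    | zero => exact h01
    | succ k ih => rw [hstep]; exact (nxt_spec hd2 ih).1
  have hfg : ∀ k, f k = (g k, g (k+1)) := fun k => rfl
  have hGadj : ∀ k, G.Adj (g k) (g (k+1)) := hadj
  have hne2 : ∀ k, g (k+2) ≠ g k := fun k => (nxt_spec hd2 (hGadj k)).2.1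
  have huniq : ∀ k c, G.Adj (g (k+1)) c → c = g k ∨ c = g (k+2) :=
    fun k c hc => (nxt_spec hd2 (hGadj k)).2.2 c hc
  have hback : ∀ j k, f (j+1) = f (k+1) → f j = f k := by
    intro j k h
    have h2 : g (j+1) = g (k+1) := congrArg Prod.fst h
    have h3 : g (j+2) = g (k+2) := congrArg Prod.snd h
    have hj : G.Adj (g (j+1)) (g j) := (hGadj j).symm
    rw [h2] at hj
    rcases huniq k _ hj with h4 | h4
    · rw [hfg, hfg, h4, h2]
    · exact absurd (h3.trans h4.symm) (hne2 j)
  have hcancel : ∀ i j k, f (j + i) = f (k + i) → f j = f k := by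
    intro i
    induction i with
    | zero => exact fun j k h => h
    | succ i ih => exact fun j k h => ih j k (hback _ _ h)
  have hexrep : ∃ p, 0 < p ∧ f p = f 0 := by
    obtain ⟨i, j, hne, hij⟩ := Finite.exists_ne_map_eq_of_infinite f
    rcases hne.lt_or_gt with h | h
    · refine ⟨j - i, by omega, hcancel i (j-i) 0 ?_⟩
      rw [Nat.sub_add_cancel h.le, Nat.zero_add]; exact hij.symm
    · refine ⟨i - j, by omega, hcancel j (i-j) 0 ?_⟩
      rw [Nat.sub_add_cancel h.le, Nat.zero_add]; exact hij
  obtain ⟨p, hppos, hfp, hmin⟩ :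
      ∃ p, 0 < p ∧ f p = f 0 ∧ ∀ k, 0 < k → k < p → f k ≠ f 0 :=
    ⟨Nat.find hexrep, (Nat.find_spec hexrep).1, (Nat.find_spec hexrep).2,
      fun k hk hkp h => Nat.find_min hexrep hkp ⟨hk, h⟩⟩
  have hfper : ∀ k, f (k + p) = f k := by
    intro k
    induction k with
    | zero => simpa using hfp
    | succ k ih =>
      have : f ((k + p) + 1) = f (k + 1) := by rw [hstep, hstep, ih]
      rwa [show k + 1 + p = (k + p) + 1 by omega]
  have hgper : ∀ k, g (k + p) = g k := fun k => congrArg Prod.fst (hfper k)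
  have hgmult : ∀ t k, g (k + p * t) = g k := by
    intro t
    induction t with
    | zero => simp
    | succ t ih =>
      intro k
      rw [show k + p * (t+1) = (k + p * t) + p by ring, hgper, ih]
  have hgmod : ∀ k, g (k % p) = g k := by
    intro k
    conv_rhs => rw [← Nat.mod_add_div k p]
    rw [hgmult]
  have hp3 : 3 ≤ p := by
    by_contra hlt
    have h1 : p = 1 ∨ p = 2 := by omega
    rcases h1 with rfl | rfl
    · exact (hGadj 0).ne' (congrArg Prod.fst hfp)
    · exact hne2 0 (congrArg Prod.fst hfp)
  have hfinj : ∀ j k, j < p → k < p → f j = f k → j = k := by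
    intro j k hj hk h
    rcases Nat.lt_trichotomy j k with hlt | he | hlt
    · exfalso
      refine hmin (k - j) (by omega) (by omega) (hcancel j (k-j) 0 ?_)
      rw [Nat.sub_add_cancel hlt.le, Nat.zero_add]; exact h.symm
    · exact he
    · exfalso
      refine hmin (j - k) (by omega) (by omega) (hcancel k (j-k) 0 ?_)
      rw [Nat.sub_add_cancel hlt.le, Nat.zero_add]; exact h
  have hrev : ∀ a b, 1 ≤ b → g a = g (b+1) → g (a+1) = g b → g (a+2) = g (b-1) := by
    intro a b hb h1 h2
    have hadj2 : G.Adj (g ((b-1)+1)) (g (a+2)) := by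
      have h' : G.Adj (g (a+1)) (g (a+2)) := hGadj (a+1)
      rw [h2] at h'
      rwa [show b - 1 + 1 = b by omega]
    rcases huniq (b-1) _ hadj2 with h | h
    · exact h
    · exfalso
      rw [show b-1+2 = b+1 by omega, ← h1] at h
      exact hne2 a h
  have hrevk : ∀ k a b, k ≤ b → g a = g (b+1) → g (a+1) = g b →
      g (a+k) = g (b+1-k) ∧ g (a+k+1) = g (b-k) := by
    intro k
    induction k with
    | zero => intro a b _ h1 h2; simpa using ⟨h1, h2⟩
    | succ k ih =>
      intro a b hk h1 h2
      obtain ⟨e1, e2⟩ := ih a b (by omega) h1 h2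
      have e1' : g (a+k) = g ((b-k)+1) := by
        rw [show (b-k)+1 = b+1-k by omega]; exact e1
      have e3 := hrev (a+k) (b-k) (by omega) e1' e2
      constructor
      · rw [show a+(k+1) = a+k+1 by ring, show b+1-(k+1) = b-k by omega]; exact e2
      · rw [show a+(k+1)+1 = a+k+2 by ring, show b-(k+1) = b-k-1 by omega]; exact e3
  have hginj : ∀ i j, i < p → j < p → g i = g j → i = j := by
    have key : ∀ i j, i < j → j < p → g i = g j → False := by
      intro i j hij hj h
      have hnb : G.Adj (g i) (g (j+1)) := by rw [h]; exact hGadj j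
      have hnbr : g (j+1) = g (i+1) ∨ g (j+1) = g (i+p-1) := by
        have hadj' : G.Adj (g (i+p-1+1)) (g (j+1)) := by
          rw [show i+p-1+1 = i+p by omega, hgper]; exact hnb
        rcases huniq (i+p-1) _ hadj' with h' | h'
        · right; exact h'
        · left; rw [h', show i+p-1+2 = (i+1)+p by omega, hgper]
      rcases hnbr with h1 | h1
      · have hfji : f j = f i := by rw [hfg, hfg, h, h1]
        exact absurd (hfinj j i hj (lt_trans hij hj) hfji) (by omega)
      · have hb1 : 1 ≤ i + p - 1 := by omega
        have hjb : j ≤ i + p - 1 := by omega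
        have h2 : g j = g ((i+p-1)+1) := by
          rw [show (i+p-1)+1 = i+p by omega, hgper]; exact h.symm
        have h3 : g (j+1) = g (i+p-1) := h1
        rcases Nat.even_or_odd ((i+p-1) + 1 - j) with ⟨k, hk⟩ | ⟨k, hk⟩
        · -- even: j + k = (i+p-1)+1-k, contradiction with hne2
          obtain ⟨e1, e2⟩ := hrevk k j (i+p-1) (by omega) h2 h3
          have hjk : 1 ≤ j + k := by omega
          refine hne2 (j+k-1) ?_
          rw [show j+k-1+2 = j+k+1 by omega, e2]; congr 1; omega
        · -- odd: j + k = (i+p-1)-k, adjacency contradiction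
          obtain ⟨e1, e2⟩ := hrevk k j (i+p-1) (by omega) h2 h3
          refine (hGadj (j+k)).ne ?_
          rw [e2]; congr 1; omega
    intro i j hi hj h
    rcases Nat.lt_trichotomy i j with hlt | he | hlt
    · exact absurd (key i j hlt hj h) (fun h => h)
    · exact he
    · exact absurd (key j i hlt hi h.symm) (fun h => h)
  have himg : ∀ v : V, ∃ k, g k = v := by
    have key : ∀ {a b : V}, G.Adj a b → (∃ k, g k = a) → ∃ k, g k = b := by
      rintro a b hab ⟨k, hk⟩
      have hadj' : G.Adj (g (k+p-1+1)) b := by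
        rw [show k+p-1+1 = k+p by omega, hgper, hk]; exact hab
      rcases huniq (k+p-1) _ hadj' with h' | h'
      · exact ⟨k+p-1, h'.symm⟩
      · exact ⟨k+p-1+2, h'.symm⟩
    have key2 : ∀ {a b : V} (w : G.Walk a b), (∃ k, g k = a) → ∃ k, g k = b := by
      intro a b w
      induction w with
      | nil => exact id
      | cons hadj q ih => exact fun ha => ih (key hadj ha)
    intro v
    obtain ⟨w⟩ := hconn v0 v
    exact key2 w ⟨0, rfl⟩
  have hbij : Function.Bijective (fun i : Fin p => g i.val) := by
    constructor
    · intro i j hij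
      exact Fin.ext (hginj i.val j.val i.isLt j.isLt hij)
    · intro v
      obtain ⟨k, hk⟩ := himg v
      exact ⟨⟨k % p, Nat.mod_lt k hppos⟩, (hgmod k).trans hk⟩
  have hcard : Fintype.card V = p := by
    rw [← Fintype.card_fin p]
    exact (Fintype.card_of_bijective hbij).symm
  rw [hcard]
  obtain ⟨q, rfl⟩ : ∃ q, p = q + 3 := ⟨p - 3, by omega⟩
  haveI : NeZero (q+3) := ⟨by omega⟩
  have h1val : (1 : Fin (q+3)).val = 1 := by
    rw [Fin.val_one']; exact Nat.mod_eq_of_lt (by omega)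
  have hvaladd : ∀ i : Fin (q+3), (i + 1 : Fin (q+3)).val = (i.val + 1) % (q+3) := by
    intro i; rw [Fin.val_add, h1val]
  have hginj' : ∀ a b, g a = g b → a % (q+3) = b % (q+3) := by
    intro a b h
    exact hginj _ _ (Nat.mod_lt a hppos) (Nat.mod_lt b hppos)
      (by rw [hgmod, hgmod, h])
  have hmaprel : ∀ i j : Fin (q+3),
      G.Adj (g i.val) (g j.val) ↔ (cycleGraph (q+3)).Adj i j := by
    intro i j
    rw [cycleGraph_adj']
    constructor
    · intro h
      have hadj' : G.Adj (g (i.val + (q+3) - 1 + 1)) (g j.val) := by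
        rw [show i.val + (q+3) - 1 + 1 = i.val + (q+3) by omega, hgper]; exact h
      have hnbr : g j.val = g (i.val + 1) ∨ g j.val = g (i.val + (q+3) - 1) := by
        rcases huniq (i.val + (q+3) - 1) _ hadj' with h' | h'
        · right; exact h'
        · left; rw [h', show i.val + (q+3) - 1 + 2 = (i.val+1) + (q+3) by omega, hgper]
      rcases hnbr with h1 | h1
      · right
        have hji : j.val % (q+3) = (i.val + 1) % (q+3) := hginj' _ _ h1
        rw [Nat.mod_eq_of_lt j.isLt] at hji
        have hj1 : j = i + 1 := Fin.ext (by rw [hvaladd]; exact hji)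
        rw [hj1, add_sub_cancel_left]
        exact h1val
      · left
        have hji : j.val % (q+3) = (i.val + (q+3) - 1) % (q+3) := hginj' _ _ h1
        rw [Nat.mod_eq_of_lt j.isLt] at hji
        have hij : i = j + 1 := by
          refine Fin.ext ?_
          rw [hvaladd, hji]
          exact (mod_aux (q+3) i.val (by omega) i.isLt).symm
        rw [hij, add_sub_cancel_left]
        exact h1val
    · intro h
      rcases h with h | h
      · -- i - j = 1, so i = j + 1
        have hij : i = j + 1 := by
          have h' : i - j = 1 := Fin.ext (by rw [h, h1val])
          rw [add_comm j 1]; exact sub_eq_iff_eq_add.mp h'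
        rw [hij, hvaladd, hgmod]
        exact (hGadj j.val).symm
      · -- j - i = 1, so j = i + 1
        have hji : j = i + 1 := by
          have h' : j - i = 1 := Fin.ext (by rw [h, h1val])
          rw [add_comm i 1]; exact sub_eq_iff_eq_add.mp h'
        rw [hji, hvaladd, hgmod]
        exact hGadj i.val
  exact ⟨(RelIso.mk (Equiv.ofBijective _ hbij) (fun {i j} => hmaprel i j)).symm⟩


lemma card_le (hd : ∀ v, 2 ≤ G.degree v) : Fintype.card V ≤ G.edgeFinset.card := by
  have h := G.sum_degrees_eq_twice_card_edges
  have h2 : 2 * Fintype.card V ≤ ∑ v, G.degree v := by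
    calc 2 * Fintype.card V = ∑ _v : V, 2 := by
          rw [Finset.sum_const, Finset.card_univ, smul_eq_mul]; ring
    _ ≤ _ := Finset.sum_le_sum (fun i _ => hd i)
  omega

lemma term_ge (hd : ∀ v, 2 ≤ G.degree v) : ∀ e ∈ G.edgeFinset,
    Real.sqrt 8 ≤ Sym2.lift ⟨fun u v =>
      Real.sqrt ((G.degree u : ℝ) ^ 2 + (G.degree v : ℝ) ^ 2),
      fun u v => by dsimp only; rw [add_comm]⟩ e := by
  intro e _he
  induction e using Sym2.ind with
  | _ u v =>
    rw [Sym2.lift_mk]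
    apply Real.sqrt_le_sqrt
    have hu : (2:ℝ) ≤ (G.degree u : ℝ) := by exact_mod_cast hd u
    have hv : (2:ℝ) ≤ (G.degree v : ℝ) := by exact_mod_cast hd v
    nlinarith

lemma so_eq (hd2 : ∀ v, G.degree v = 2) :
    (∑ e ∈ G.edgeFinset, Sym2.lift ⟨fun u v =>
      Real.sqrt ((G.degree u : ℝ) ^ 2 + (G.degree v : ℝ) ^ 2),
      fun u v => by dsimp only; rw [add_comm]⟩ e)
      = Real.sqrt 8 * (Fintype.card V : ℝ) := by
  have hm : G.edgeFinset.card = Fintype.card V := by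
    have h := G.sum_degrees_eq_twice_card_edges
    have h2 : ∑ v, G.degree v = 2 * Fintype.card V := by
      rw [Finset.sum_congr rfl (fun v _ => hd2 v), Finset.sum_const, Finset.card_univ,
        smul_eq_mul]
      ring
    omega
  have hterm : ∀ e ∈ G.edgeFinset, Sym2.lift ⟨fun u v =>
      Real.sqrt ((G.degree u : ℝ) ^ 2 + (G.degree v : ℝ) ^ 2),
      fun u v => by dsimp only; rw [add_comm]⟩ e = Real.sqrt 8 := by
    intro e _he
    induction e using Sym2.ind with
    | _ u v =>
      rw [Sym2.lift_mk]
      show Real.sqrt ((G.degree u : ℝ) ^ 2 + (G.degree v : ℝ) ^ 2) = Real.sqrt 8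
      rw [hd2, hd2]
      norm_num
  rw [Finset.sum_congr rfl hterm, Finset.sum_const, hm, nsmul_eq_mul, mul_comm]

lemma iso_deg {n : ℕ} (h3 : 3 ≤ n) (φ : G ≃g cycleGraph n) (v : V) : G.degree v = 2 := by
  obtain ⟨q, rfl⟩ : ∃ q, n = q + 3 := ⟨n - 3, by omega⟩
  have h := Fintype.card_congr (φ.mapNeighborSet v)
  rw [card_neighborSet_eq_degree, card_neighborSet_eq_degree] at h
  rw [h]
  exact cycleGraph_degree_three_le

end SomborAux

theorem sombor_bridgeless {V : Type*} [Fintype V] (G : SimpleGraph V)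
    (hn : 3 ≤ Fintype.card V) (hconn : G.Connected)
    (hbridgeless : ∀ e ∈ G.edgeSet, ¬ G.IsBridge e) :
    Real.sqrt 8 * (Fintype.card V : ℝ) ≤ somborIndex G ∧
      (somborIndex G = Real.sqrt 8 * (Fintype.card V : ℝ) ↔
        Nonempty (G ≃g SimpleGraph.cycleGraph (Fintype.card V))) := by
  letI := Classical.decEq V
  letI : DecidableRel G.Adj := Classical.decRel _
  have hso : somborIndex G = ∑ e ∈ G.edgeFinset,
      Sym2.lift ⟨fun u v => Real.sqrt ((G.degree u : ℝ) ^ 2 + (G.degree v : ℝ) ^ 2),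
        fun u v => by dsimp only; rw [add_comm]⟩ e := rfl
  have hd : ∀ v, 2 ≤ G.degree v := SomborAux.deg_ge_two hn hconn hbridgeless
  have hcard : Fintype.card V ≤ G.edgeFinset.card := SomborAux.card_le hd
  have hlow : Real.sqrt 8 * (G.edgeFinset.card : ℝ) ≤ somborIndex G := by
    have h := Finset.card_nsmul_le_sum G.edgeFinset _ _ (SomborAux.term_ge hd)
    rw [nsmul_eq_mul] at h
    rw [hso, mul_comm]
    exact h
  have h1 : Real.sqrt 8 * (Fintype.card V : ℝ) ≤ Real.sqrt 8 * (G.edgeFinset.card : ℝ) :=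
    mul_le_mul_of_nonneg_left (by exact_mod_cast hcard) (Real.sqrt_nonneg 8)
  refine ⟨le_trans h1 hlow, ?_, ?_⟩
  · intro heq
    have hpos : (0:ℝ) < Real.sqrt 8 := Real.sqrt_pos.mpr (by norm_num)
    have hmn : G.edgeFinset.card ≤ Fintype.card V := by
      have h2 : Real.sqrt 8 * (G.edgeFinset.card : ℝ) ≤
          Real.sqrt 8 * (Fintype.card V : ℝ) := by rw [← heq]; exact hlow
      have := le_of_mul_le_mul_left h2 hpos
      exact_mod_cast this
    have hmeq : G.edgeFinset.card = Fintype.card V := le_antisymm hmn hcard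
    have hd2 : ∀ v, G.degree v = 2 := by
      by_contra hcon
      push_neg at hcon
      obtain ⟨v, hv⟩ := hcon
      have hlt : ∑ _v : V, 2 < ∑ v, G.degree v :=
        Finset.sum_lt_sum (fun i _ => hd i)
          ⟨v, Finset.mem_univ v, lt_of_le_of_ne (hd v) (Ne.symm hv)⟩
      rw [Finset.sum_const, Finset.card_univ, smul_eq_mul] at hlt
      have hsum := G.sum_degrees_eq_twice_card_edges
      omega
    exact SomborAux.cycle_iso hconn hd2 hn
  · rintro ⟨φ⟩
    have hd2 : ∀ v, G.degree v = 2 := fun v => SomborAux.iso_deg hn φ v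
    rw [hso]
    exact SomborAux.so_eq hd2
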